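/- Let k ≥ 1 be an integer, c = (c₁, c₂) ∈ ℂ², and let w ∈ ℂ with w ≠ 0 and w² ≠ 1; fix r₁, r₂ ∈ ℂ with r₁² = 1 + w, r₂² = 1 − w and set A₁ := 1/(2r₁) + 1/(2·i·r₂), A₂ := 1/(2r₁) − 1/(2·i·r₂). Let a₁, a₂, b₁, b₂ ∈ ℂ and set L₁(z₁, z₂) := a₁z₁ + a₂z₂, L₂(z₁, z₂) := b₁z₁ + b₂z₂; let Φ₁, Ψ₁ : ℂ → ℂ satisfy Φ₁(t + c₂) = Φ₁(t) and Ψ₁(t + c₂) = Ψ₁(t) for all t ∈ ℂ; and let d₁, d₂, d₃, d₄ ∈ ℂ satisfy A₁·exp(L₁(c) + d₁ − d₂) = A₂·a₁ᵏ, A₁·exp(L₁(c) + d₂ − d₁) = A₂·a₁ᵏ, A₂·exp(L₂(c) + d₃ − d₄) = A₁·b₁ᵏ and A₂·exp(L₂(c) + d₄ − d₃) = A₁·b₁ᵏ. Define f(z₁, z₂) := (A₂·exp(L₁(z) + Φ₁(z₂) − L₁(c) + d₂) + A₁·exp(L₂(z) + Ψ₁(z₂) − L₂(c) + d₄))/√2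 and g(z₁, z₂) := (A₂·exp(L₁(z) + Φ₁(z₂) − L₁(c) + d₁) + A₁·exp(L₂(z) + Ψ₁(z₂) − L₂(c) + d₃))/√2. Then for all (z₁, z₂) ∈ ℂ²: (∂ᵏf/∂z₁ᵏ)(z)² + 2w·(∂ᵏf/∂z₁ᵏ)(z)·g(z₁ + c₁, z₂ + c₂) + g(z₁ + c₁, z₂ + c₂)² = exp(L₁(z) + L₂(z) + Φ₁(z₂) + Ψ₁(z₂) + d₁ + d₃) and (∂ᵏg/∂z₁ᵏ)(z)² + 2w·(∂ᵏg/∂z₁ᵏ)(z)·f(z₁ + c₁, z₂ + c₂) + f(z₁ + c₁, z₂ + c₂)² = exp(L₁(z) + L₂(z) + Φ₁(z₂) + Ψ₁(z₂) + d₂ + d₄). -/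

import Mathlib

lemma aux_iter (a b c d A B s : ℂ) (k : ℕ) (z : ℂ) :
    iteratedDeriv k (fun t => (A * Complex.exp (a*t+b) + B * Complex.exp (c*t+d))/s) z
    = (A * a^k * Complex.exp (a*z+b) + B * c^k * Complex.exp (c*z+d))/s := by
  induction k generalizing A B with
  | zero => simp
  | succ n ih =>
    rw [iteratedDeriv_succ']
    have hd : deriv (fun t => (A * Complex.exp (a*t+b) + B * Complex.exp (c*t+d))/s)
        = fun t => ((A*a) * Complex.exp (a*t+b) + (B*c) * Complex.exp (c*t+d))/s := by
      funext t
      have h1 : HasDerivAt (fun t : ℂ => Complex.exp (a*t+b)) (Complex.exp (a*t+b) * a) t := by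
        simpa using (((hasDerivAt_id t).const_mul a).add_const b).cexp
      have h2 : HasDerivAt (fun t : ℂ => Complex.exp (c*t+d)) (Complex.exp (c*t+d) * c) t := by
        simpa using (((hasDerivAt_id t).const_mul c).add_const d).cexp
      have := (((h1.const_mul A).add (h2.const_mul B)).div_const s).deriv
      exact this.trans (by ring)
    rw [hd, ih]
    ring_nf

lemma keyA (w p q A₁ A₂ : ℂ)
    (hp2 : p^2 = 1+w) (hq2 : q^2 = w-1)
    (hp : p ≠ 0) (hq : q ≠ 0)
    (hw2 : w ^ 2 ≠ 1)
    (hA₁ : A₁ = 1/(2*p) + 1/(2*q)) (hA₂ : A₂ = 1/(2*p) - 1/(2*q)) :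
    A₁^2 + A₂^2 + 2*w*A₁*A₂ = 0 ∧ 2*A₁*A₂ + w*(A₁^2+A₂^2) = 1 := by
  have e1 : A₁^2+A₂^2 = 1/(2*p^2) + 1/(2*q^2) := by rw [hA₁,hA₂]; field_simp; ring
  have e2 : A₁*A₂ = 1/(4*p^2) - 1/(4*q^2) := by rw [hA₁,hA₂]; field_simp; ring
  have h1 : (1:ℂ)+w ≠ 0 := by intro h; apply hw2; linear_combination (w-1)*h
  have h2 : w-1 ≠ 0 := by intro h; apply hw2; linear_combination (w+1)*h
  rw [show 2*w*A₁*A₂ = 2*w*(A₁*A₂) by ring, show 2*A₁*A₂ = 2*(A₁*A₂) by ring, e1, e2, hp2, hq2]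
  constructor
  · field_simp; ring
  · field_simp; ring

lemma keyQ (w A₁ A₂ P Q u v s : ℂ) (hs : s^2 = 2) (hs0 : s ≠ 0)
    (hA : A₁^2+A₂^2+2*w*A₁*A₂ = 0) (hB : 2*A₁*A₂ + w*(A₁^2+A₂^2) = 1) :
    ((A₁*u*P + A₂*v*Q)/s)^2 + 2*w*((A₁*u*P+A₂*v*Q)/s)*((A₂*u*P+A₁*v*Q)/s)
      + ((A₂*u*P+A₁*v*Q)/s)^2 = u*v*(P*Q) := by
  have expand : (A₁*u*P + A₂*v*Q)^2 + 2*w*(A₁*u*P+A₂*v*Q)*(A₂*u*P+A₁*v*Q)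
      + (A₂*u*P+A₁*v*Q)^2 = 2*(u*v*(P*Q)) := by
    linear_combination (u^2*P^2+v^2*Q^2)*hA + 2*u*v*P*Q*hB
  calc ((A₁*u*P + A₂*v*Q)/s)^2 + 2*w*((A₁*u*P+A₂*v*Q)/s)*((A₂*u*P+A₁*v*Q)/s)
      + ((A₂*u*P+A₁*v*Q)/s)^2
      = ((A₁*u*P + A₂*v*Q)^2 + 2*w*(A₁*u*P+A₂*v*Q)*(A₂*u*P+A₁*v*Q)
        + (A₂*u*P+A₁*v*Q)^2)/s^2 := by ring
    _ = (2*(u*v*(P*Q)))/s^2 := by rw [expand]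
    _ = u*v*(P*Q) := by rw [hs]; ring

theorem stmt_13 (k : ℕ) (hk : 1 ≤ k) (c₁ c₂ : ℂ) (w r₁ r₂ A₁ A₂ : ℂ)
    (hw : w ≠ 0) (hw2 : w ^ 2 ≠ 1)
    (hr₁ : r₁ ^ 2 = 1 + w) (hr₂ : r₂ ^ 2 = 1 - w)
    (hA₁ : A₁ = 1 / (2 * r₁) + 1 / (2 * Complex.I * r₂))
    (hA₂ : A₂ = 1 / (2 * r₁) - 1 / (2 * Complex.I * r₂))
    (a₁ a₂ b₁ b₂ : ℂ) (L₁ L₂ : ℂ → ℂ → ℂ)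
    (hL₁ : ∀ z₁ z₂, L₁ z₁ z₂ = a₁ * z₁ + a₂ * z₂)
    (hL₂ : ∀ z₁ z₂, L₂ z₁ z₂ = b₁ * z₁ + b₂ * z₂)
    (Φ₁ Ψ₁ : ℂ → ℂ) (hΦ₁ : ∀ t, Φ₁ (t + c₂) = Φ₁ t) (hΨ₁ : ∀ t, Ψ₁ (t + c₂) = Ψ₁ t)
    (d₁ d₂ d₃ d₄ : ℂ)
    (h₁ : A₁ * Complex.exp (L₁ c₁ c₂ + d₁ - d₂) = A₂ * a₁ ^ k)
    (h₂ : A₁ * Complex.exp (L₁ c₁ c₂ + d₂ - d₁) = A₂ * a₁ ^ k)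
    (h₃ : A₂ * Complex.exp (L₂ c₁ c₂ + d₃ - d₄) = A₁ * b₁ ^ k)
    (h₄ : A₂ * Complex.exp (L₂ c₁ c₂ + d₄ - d₃) = A₁ * b₁ ^ k)
    (f g : ℂ → ℂ → ℂ)
    (hf : ∀ z₁ z₂, f z₁ z₂ = (A₂ * Complex.exp (L₁ z₁ z₂ + Φ₁ z₂ - L₁ c₁ c₂ + d₂)
      + A₁ * Complex.exp (L₂ z₁ z₂ + Ψ₁ z₂ - L₂ c₁ c₂ + d₄)) / (Real.sqrt 2 : ℂ))
    (hg : ∀ z₁ z₂, g z₁ z₂ = (A₂ * Complex.exp (L₁ z₁ z₂ + Φ₁ z₂ - L₁ c₁ c₂ + d₁)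
      + A₁ * Complex.exp (L₂ z₁ z₂ + Ψ₁ z₂ - L₂ c₁ c₂ + d₃)) / (Real.sqrt 2 : ℂ)) :
    ∀ z₁ z₂ : ℂ,
      (iteratedDeriv k (fun t => f t z₂) z₁) ^ 2
          + 2 * w * (iteratedDeriv k (fun t => f t z₂) z₁) * g (z₁ + c₁) (z₂ + c₂)
          + g (z₁ + c₁) (z₂ + c₂) ^ 2
        = Complex.exp (L₁ z₁ z₂ + L₂ z₁ z₂ + Φ₁ z₂ + Ψ₁ z₂ + d₁ + d₃) ∧
      (iteratedDeriv k (fun t => g t z₂) z₁) ^ 2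
          + 2 * w * (iteratedDeriv k (fun t => g t z₂) z₁) * f (z₁ + c₁) (z₂ + c₂)
          + f (z₁ + c₁) (z₂ + c₂) ^ 2
        = Complex.exp (L₁ z₁ z₂ + L₂ z₁ z₂ + Φ₁ z₂ + Ψ₁ z₂ + d₂ + d₄) := by
  intro z₁ z₂
  -- basic nonvanishing facts
  have hr₁0 : r₁ ≠ 0 := by
    intro h; rw [h] at hr₁; simp at hr₁
    apply hw2; rw [show w = -1 by linear_combination -hr₁]; ring
  have hr₂0 : r₂ ≠ 0 := by
    intro h; rw [h] at hr₂; simp at hr₂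
    apply hw2; rw [show w = 1 by linear_combination hr₂]; ring
  have hq0 : Complex.I * r₂ ≠ 0 := mul_ne_zero Complex.I_ne_zero hr₂0
  have hq2 : (Complex.I * r₂)^2 = w - 1 := by
    rw [mul_pow, Complex.I_sq]; linear_combination -hr₂
  obtain ⟨hA, hB⟩ := keyA w r₁ (Complex.I * r₂) A₁ A₂ hr₁ hq2 hr₁0 hq0 hw2
    (by rw [hA₁]; ring) (by rw [hA₂]; ring)
  have hs2 : ((Real.sqrt 2 : ℝ) : ℂ)^2 = 2 := by
    rw [← Complex.ofReal_pow, Real.sq_sqrt (by norm_num : (2:ℝ) ≥ 0)]; norm_num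
  have hs0 : ((Real.sqrt 2 : ℝ) : ℂ) ≠ 0 :=
    Complex.ofReal_ne_zero.mpr (ne_of_gt (Real.sqrt_pos.mpr two_pos))
  set P := Complex.exp (a₁*z₁ + a₂*z₂ + Φ₁ z₂) with hP
  set Q := Complex.exp (b₁*z₁ + b₂*z₂ + Ψ₁ z₂) with hQ
  have h₁' := h₁; have h₂' := h₂; have h₃' := h₃; have h₄' := h₄
  rw [hL₁] at h₁' h₂'; rw [hL₂] at h₃' h₄'
  -- derivative of f
  have hfe : (fun t => f t z₂) = fun t =>
      (A₂ * Complex.exp (a₁*t + (a₂*z₂ + Φ₁ z₂ - (a₁*c₁+a₂*c₂) + d₂))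
        + A₁ * Complex.exp (b₁*t + (b₂*z₂ + Ψ₁ z₂ - (b₁*c₁+b₂*c₂) + d₄))) / (Real.sqrt 2 : ℂ) := by
    funext t
    rw [hf, hL₁ t z₂, hL₂ t z₂, hL₁ c₁ c₂, hL₂ c₁ c₂,
      show a₁*t+a₂*z₂ + Φ₁ z₂ - (a₁*c₁+a₂*c₂) + d₂
        = a₁*t + (a₂*z₂ + Φ₁ z₂ - (a₁*c₁+a₂*c₂) + d₂) from by ring,
      show b₁*t+b₂*z₂ + Ψ₁ z₂ - (b₁*c₁+b₂*c₂) + d₄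
        = b₁*t + (b₂*z₂ + Ψ₁ z₂ - (b₁*c₁+b₂*c₂) + d₄) from by ring]
  have hge : (fun t => g t z₂) = fun t =>
      (A₂ * Complex.exp (a₁*t + (a₂*z₂ + Φ₁ z₂ - (a₁*c₁+a₂*c₂) + d₁))
        + A₁ * Complex.exp (b₁*t + (b₂*z₂ + Ψ₁ z₂ - (b₁*c₁+b₂*c₂) + d₃))) / (Real.sqrt 2 : ℂ) := by
    funext t
    rw [hg, hL₁ t z₂, hL₂ t z₂, hL₁ c₁ c₂, hL₂ c₁ c₂,
      show a₁*t+a₂*z₂ + Φ₁ z₂ - (a₁*c₁+a₂*c₂) + d₁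
        = a₁*t + (a₂*z₂ + Φ₁ z₂ - (a₁*c₁+a₂*c₂) + d₁) from by ring,
      show b₁*t+b₂*z₂ + Ψ₁ z₂ - (b₁*c₁+b₂*c₂) + d₃
        = b₁*t + (b₂*z₂ + Ψ₁ z₂ - (b₁*c₁+b₂*c₂) + d₃) from by ring]
  -- coefficient conversions
  have e1 : A₂ * a₁^k * Complex.exp (a₁*z₁ + (a₂*z₂ + Φ₁ z₂ - (a₁*c₁+a₂*c₂) + d₂))
      = A₁ * Complex.exp d₁ * P := by
    rw [← h₁', mul_assoc, ← Complex.exp_add,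
      show a₁*c₁+a₂*c₂ + d₁ - d₂ + (a₁*z₁ + (a₂*z₂ + Φ₁ z₂ - (a₁*c₁+a₂*c₂) + d₂))
        = d₁ + (a₁*z₁ + a₂*z₂ + Φ₁ z₂) from by ring, Complex.exp_add, ← mul_assoc, hP]
  have e2 : A₁ * b₁^k * Complex.exp (b₁*z₁ + (b₂*z₂ + Ψ₁ z₂ - (b₁*c₁+b₂*c₂) + d₄))
      = A₂ * Complex.exp d₃ * Q := by
    rw [← h₃', mul_assoc, ← Complex.exp_add,
      show b₁*c₁+b₂*c₂ + d₃ - d₄ + (b₁*z₁ + (b₂*z₂ + Ψ₁ z₂ - (b₁*c₁+b₂*c₂) + d₄))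
        = d₃ + (b₁*z₁ + b₂*z₂ + Ψ₁ z₂) from by ring, Complex.exp_add, ← mul_assoc, hQ]
  have e3 : A₂ * a₁^k * Complex.exp (a₁*z₁ + (a₂*z₂ + Φ₁ z₂ - (a₁*c₁+a₂*c₂) + d₁))
      = A₁ * Complex.exp d₂ * P := by
    rw [← h₂', mul_assoc, ← Complex.exp_add,
      show a₁*c₁+a₂*c₂ + d₂ - d₁ + (a₁*z₁ + (a₂*z₂ + Φ₁ z₂ - (a₁*c₁+a₂*c₂) + d₁))
        = d₂ + (a₁*z₁ + a₂*z₂ + Φ₁ z₂) from by ring, Complex.exp_add, ← mul_assoc, hP]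
  have e4 : A₁ * b₁^k * Complex.exp (b₁*z₁ + (b₂*z₂ + Ψ₁ z₂ - (b₁*c₁+b₂*c₂) + d₃))
      = A₂ * Complex.exp d₄ * Q := by
    rw [← h₄', mul_assoc, ← Complex.exp_add,
      show b₁*c₁+b₂*c₂ + d₄ - d₃ + (b₁*z₁ + (b₂*z₂ + Ψ₁ z₂ - (b₁*c₁+b₂*c₂) + d₃))
        = d₄ + (b₁*z₁ + b₂*z₂ + Ψ₁ z₂) from by ring, Complex.exp_add, ← mul_assoc, hQ]
  have Fk : iteratedDeriv k (fun t => f t z₂) z₁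
      = (A₁ * Complex.exp d₁ * P + A₂ * Complex.exp d₃ * Q) / (Real.sqrt 2 : ℂ) := by
    rw [hfe, aux_iter, e1, e2]
  have Gk : iteratedDeriv k (fun t => g t z₂) z₁
      = (A₁ * Complex.exp d₂ * P + A₂ * Complex.exp d₄ * Q) / (Real.sqrt 2 : ℂ) := by
    rw [hge, aux_iter, e3, e4]
  -- shifted values
  have Gv : g (z₁ + c₁) (z₂ + c₂)
      = (A₂ * Complex.exp d₁ * P + A₁ * Complex.exp d₃ * Q) / (Real.sqrt 2 : ℂ) := by
    rw [hg, hΦ₁, hΨ₁, hL₁, hL₂, hL₁ c₁ c₂, hL₂ c₁ c₂,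
      show a₁*(z₁+c₁)+a₂*(z₂+c₂) + Φ₁ z₂ - (a₁*c₁+a₂*c₂) + d₁
        = d₁ + (a₁*z₁ + a₂*z₂ + Φ₁ z₂) from by ring,
      show b₁*(z₁+c₁)+b₂*(z₂+c₂) + Ψ₁ z₂ - (b₁*c₁+b₂*c₂) + d₃
        = d₃ + (b₁*z₁ + b₂*z₂ + Ψ₁ z₂) from by ring,
      Complex.exp_add d₁ _, Complex.exp_add d₃ _, ← hP, ← hQ]
    ring
  have Fv : f (z₁ + c₁) (z₂ + c₂)
      = (A₂ * Complex.exp d₂ * P + A₁ * Complex.exp d₄ * Q) / (Real.sqrt 2 : ℂ) := by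
    rw [hf, hΦ₁, hΨ₁, hL₁, hL₂, hL₁ c₁ c₂, hL₂ c₁ c₂,
      show a₁*(z₁+c₁)+a₂*(z₂+c₂) + Φ₁ z₂ - (a₁*c₁+a₂*c₂) + d₂
        = d₂ + (a₁*z₁ + a₂*z₂ + Φ₁ z₂) from by ring,
      show b₁*(z₁+c₁)+b₂*(z₂+c₂) + Ψ₁ z₂ - (b₁*c₁+b₂*c₂) + d₄
        = d₄ + (b₁*z₁ + b₂*z₂ + Ψ₁ z₂) from by ring,
      Complex.exp_add d₂ _, Complex.exp_add d₄ _, ← hP, ← hQ]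
    ring
  constructor
  · rw [Fk, Gv, hL₁, hL₂,
      show a₁*z₁+a₂*z₂ + (b₁*z₁+b₂*z₂) + Φ₁ z₂ + Ψ₁ z₂ + d₁ + d₃
        = d₁ + (d₃ + ((a₁*z₁ + a₂*z₂ + Φ₁ z₂) + (b₁*z₁ + b₂*z₂ + Ψ₁ z₂))) from by ring,
      Complex.exp_add d₁ _, Complex.exp_add d₃ _,
      Complex.exp_add (a₁*z₁ + a₂*z₂ + Φ₁ z₂) _, ← hP, ← hQ]
    rw [show Complex.exp d₁ * (Complex.exp d₃ * (P * Q))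
      = Complex.exp d₁ * Complex.exp d₃ * (P * Q) from by rw [mul_assoc]]
    exact keyQ w A₁ A₂ P Q (Complex.exp d₁) (Complex.exp d₃) _ hs2 hs0 hA hB
  · rw [Gk, Fv, hL₁, hL₂,
      show a₁*z₁+a₂*z₂ + (b₁*z₁+b₂*z₂) + Φ₁ z₂ + Ψ₁ z₂ + d₂ + d₄
        = d₂ + (d₄ + ((a₁*z₁ + a₂*z₂ + Φ₁ z₂) + (b₁*z₁ + b₂*z₂ + Ψ₁ z₂))) from by ring,
      Complex.exp_add d₂ _, Complex.exp_add d₄ _,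
      Complex.exp_add (a₁*z₁ + a₂*z₂ + Φ₁ z₂) _, ← hP, ← hQ]
    rw [show Complex.exp d₂ * (Complex.exp d₄ * (P * Q))
      = Complex.exp d₂ * Complex.exp d₄ * (P * Q) from by rw [mul_assoc]]
    exact keyQ w A₁ A₂ P Q (Complex.exp d₂) (Complex.exp d₄) _ hs2 hs0 hA hB
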